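/- For every natural number m there exists a finite set S ⊂ ℝ² with |S| = m that is shattered by the class of monotone tubes, i.e., for every subset A ⊆ S there is a monotone tube C with C ∩ S = A. Hence the class of monotone tubes is not a Vapnik–Chervonenkis class. -/
import Mathlib


/-- A monotone tube `{(x,y) : −δ ≤ h(x) + y ≤ δ}` with `h` strictly monotone, `δ ≥ 0`. -/
def IsMonotoneTube (C : Set (ℝ × ℝ)) : Prop :=
  ∃ (h : ℝ → ℝ) (δ : ℝ), (StrictMono h ∨ StrictAnti h) ∧ 0 ≤ δ ∧
    C = {p : ℝ × ℝ | -δ ≤ h p.1 + p.2 ∧ h p.1 + p.2 ≤ δ}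

/-- A tent function: height 1 at 0, supported on `(-1/2, 1/2)`. -/
noncomputable def tent (u : ℝ) : ℝ := max 0 (1 - 2 * |u|)

lemma tent_lip (u v : ℝ) : |tent u - tent v| ≤ 2 * |u - v| := by
  have h1 : |tent u - tent v| ≤ |(1 - 2 * |u|) - (1 - 2 * |v|)| := by
    unfold tent
    rw [max_comm 0 (1 - 2 * |u|), max_comm 0 (1 - 2 * |v|)]
    exact abs_max_sub_max_le_abs _ _ _
  have h2 : (1 - 2 * |u|) - (1 - 2 * |v|) = 2 * (|v| - |u|) := by ring
  rw [h2, abs_mul, abs_two] at h1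
  have h3 : |(|v| - |u|)| ≤ |v - u| := abs_abs_sub_abs_le_abs_sub v u
  have h4 : |v - u| = |u - v| := abs_sub_comm v u
  nlinarith [h1, h3]

lemma tent_zero : tent 0 = 1 := by
  unfold tent; rw [abs_zero]; norm_num

lemma tent_far {u : ℝ} (h : 1 ≤ |u|) : tent u = 0 := by
  unfold tent
  have : 1 - 2 * |u| ≤ 0 := by linarith
  exact max_eq_left this

/-- Perturbed decreasing function: `-x` plus small tents at the integers in `T`. -/
noncomputable def hfun (T : Finset ℕ) (x : ℝ) : ℝ :=
  -x + ∑ j ∈ T, (1/4 : ℝ) ^ (j + 1) * tent (x - j)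

lemma sum_c_le (T : Finset ℕ) : (∑ j ∈ T, (1/4 : ℝ) ^ (j + 1)) ≤ 1/3 := by
  obtain ⟨n, hn⟩ := T.exists_nat_subset_range
  have h1 : (∑ j ∈ T, (1/4 : ℝ) ^ (j + 1)) ≤ ∑ j ∈ Finset.range n, (1/4 : ℝ) ^ (j + 1) := by
    apply Finset.sum_le_sum_of_subset_of_nonneg hn
    intro i _ _; positivity
  have h2 : (∑ j ∈ Finset.range n, (1/4 : ℝ) ^ (j + 1))
      = (1/4) * ∑ j ∈ Finset.range n, (1/4 : ℝ) ^ j := by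
    rw [Finset.mul_sum]
    apply Finset.sum_congr rfl
    intro j _; ring
  have h3 : (∑ j ∈ Finset.range n, (1/4 : ℝ) ^ j) = ((1/4 : ℝ) ^ n - 1) / ((1/4) - 1) :=
    geom_sum_eq (by norm_num) n
  have h4 : (0:ℝ) ≤ (1/4 : ℝ) ^ n := by positivity
  rw [h2, h3] at h1
  have h5 : (1/4 : ℝ) * (((1/4 : ℝ) ^ n - 1) / ((1/4) - 1)) = (1 - (1/4 : ℝ) ^ n) / 3 := by
    ring
  rw [h5] at h1
  linarith

lemma hfun_anti (T : Finset ℕ) : StrictAnti (hfun T) := by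
  intro x y hxy
  unfold hfun
  have hpos : 0 < y - x := by linarith
  have key : (∑ j ∈ T, (1/4 : ℝ) ^ (j + 1) * tent (y - j))
      - (∑ j ∈ T, (1/4 : ℝ) ^ (j + 1) * tent (x - j)) ≤ (2/3) * (y - x) := by
    rw [← Finset.sum_sub_distrib]
    have step : ∀ j ∈ T, (1/4 : ℝ) ^ (j + 1) * tent (y - j) - (1/4 : ℝ) ^ (j + 1) * tent (x - j)
        ≤ (1/4 : ℝ) ^ (j + 1) * (2 * (y - x)) := by
      intro j _
      have hc : (0:ℝ) ≤ (1/4 : ℝ) ^ (j + 1) := by positivity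
      have hl := tent_lip (y - j) (x - j)
      have habs : |(y - (j:ℝ)) - (x - j)| = y - x := by
        rw [show (y - (j:ℝ)) - (x - j) = y - x by ring, abs_of_pos hpos]
      rw [habs] at hl
      have h5 : tent (y - (j:ℝ)) - tent (x - j) ≤ 2 * (y - x) :=
        (le_abs_self _).trans hl
      calc (1/4 : ℝ) ^ (j + 1) * tent (y - j) - (1/4 : ℝ) ^ (j + 1) * tent (x - j)
          = (1/4 : ℝ) ^ (j + 1) * (tent (y - (j:ℝ)) - tent (x - j)) := by ring
        _ ≤ (1/4 : ℝ) ^ (j + 1) * (2 * (y - x)) := mul_le_mul_of_nonneg_left h5 hc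
    calc (∑ j ∈ T, ((1/4 : ℝ) ^ (j + 1) * tent (y - j) - (1/4 : ℝ) ^ (j + 1) * tent (x - j)))
        ≤ ∑ j ∈ T, (1/4 : ℝ) ^ (j + 1) * (2 * (y - x)) := Finset.sum_le_sum step
      _ = (∑ j ∈ T, (1/4 : ℝ) ^ (j + 1)) * (2 * (y - x)) := by rw [← Finset.sum_mul]
      _ ≤ (1/3) * (2 * (y - x)) := by
          apply mul_le_mul_of_nonneg_right (sum_c_le T)
          nlinarith [hpos]
      _ = (2/3) * (y - x) := by ring
  linarith [key]

lemma hfun_nat (T : Finset ℕ) (i : ℕ) :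
    hfun T (i : ℝ) = -(i : ℝ) + (if i ∈ T then (1/4 : ℝ) ^ (i + 1) else 0) := by
  unfold hfun
  congr 1
  have step : ∀ j ∈ T, (1/4 : ℝ) ^ (j + 1) * tent ((i : ℝ) - j)
      = if j = i then (1/4 : ℝ) ^ (j + 1) else 0 := by
    intro j _
    by_cases hji : j = i
    · subst hji
      simp [tent_zero]
    · have h1 : (1:ℝ) ≤ |(i : ℝ) - j| := by
        rcases lt_or_gt_of_ne hji with h | h
        · have : (j:ℝ) + 1 ≤ i := by exact_mod_cast Nat.succ_le_of_lt h
          rw [abs_of_pos (by linarith)]; linarith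
        · have : (i:ℝ) + 1 ≤ j := by exact_mod_cast Nat.succ_le_of_lt h
          rw [abs_of_neg (by linarith)]; linarith
      rw [tent_far h1, if_neg hji, mul_zero]
  rw [Finset.sum_congr rfl step, Finset.sum_ite_eq' T i (fun j => (1/4 : ℝ) ^ (j + 1))]

/-- For every `m` there is a set of `m` points in `ℝ²` shattered by the
class of monotone tubes; hence the monotone tubes do not form a VC class. -/
theorem statement_15 (m : ℕ) :
    ∃ S : Finset (ℝ × ℝ), S.card = m ∧
      ∀ A : Finset (ℝ × ℝ), A ⊆ S →
        ∃ C : Set (ℝ × ℝ), IsMonotoneTube C ∧ C ∩ (S : Set (ℝ × ℝ)) = (A : Set (ℝ × ℝ)) := by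
  classical
  have hinj : Function.Injective (fun i : ℕ => ((i : ℝ), (i : ℝ))) := by
    intro a b hab
    have : (a : ℝ) = b := congrArg Prod.fst hab
    exact_mod_cast this
  refine ⟨(Finset.range m).image (fun i : ℕ => ((i : ℝ), (i : ℝ))), ?_, ?_⟩
  · rw [Finset.card_image_of_injective _ hinj, Finset.card_range]
  · intro A hA
    set B : Finset ℕ := (Finset.range m).filter (fun i => ((i : ℝ), (i : ℝ)) ∈ A) with hB
    set T : Finset ℕ := Finset.range m \ B with hT
    refine ⟨{p : ℝ × ℝ | -(0:ℝ) ≤ hfun T p.1 + p.2 ∧ hfun T p.1 + p.2 ≤ 0},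
      ⟨hfun T, 0, Or.inr (hfun_anti T), le_refl 0, rfl⟩, ?_⟩
    ext p
    constructor
    · rintro ⟨hpC, hpS⟩
      rw [Finset.mem_coe, Finset.mem_image] at hpS
      obtain ⟨i, him, rfl⟩ := hpS
      rw [Finset.mem_range] at him
      obtain ⟨h1, h2⟩ := hpC
      rw [Finset.mem_coe]
      have heq : hfun T (i : ℝ) + (i : ℝ) = 0 := le_antisymm h2 (by linarith [h1])
      rw [hfun_nat] at heq
      have hiT : i ∉ T := by
        intro hiT
        rw [if_pos hiT] at heq
        have : (0:ℝ) < (1/4 : ℝ) ^ (i + 1) := by positivity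
        linarith
      have hiB : i ∈ B := by
        rw [hT] at hiT
        simp only [Finset.mem_sdiff, Finset.mem_range] at hiT
        by_contra hnB
        exact hiT ⟨him, hnB⟩
      rw [hB, Finset.mem_filter] at hiB
      exact hiB.2
    · intro hpA
      rw [Finset.mem_coe] at hpA
      have hpS := hA hpA
      rw [Finset.mem_image] at hpS
      obtain ⟨i, him, rfl⟩ := hpS
      rw [Finset.mem_range] at him
      have hiB : i ∈ B := by
        rw [hB, Finset.mem_filter]
        exact ⟨Finset.mem_range.mpr him, hpA⟩
      have hiT : i ∉ T := by
        rw [hT]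
        simp only [Finset.mem_sdiff]
        intro h; exact h.2 hiB
      refine ⟨⟨?_, ?_⟩, ?_⟩
      · rw [neg_zero]
        show (0:ℝ) ≤ hfun T (i : ℝ) + (i : ℝ)
        rw [hfun_nat, if_neg hiT]; simp
      · show hfun T (i : ℝ) + (i : ℝ) ≤ 0
        rw [hfun_nat, if_neg hiT]; simp
      · rw [Finset.mem_coe, Finset.mem_image]
        exact ⟨i, Finset.mem_range.mpr him, rfl⟩
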